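/- arXiv:1108.4859 — 3 statements merged into one kernel-verified Lean document; each statement's English description precedes it below -/
import Mathlib

section
/- For all μ > 0 and a, θ, v ∈ ℝ, the energy of the soliton profile is H(η(·; μ, a, θ, v)) = (1/2) μ^{-1} v² - (1/6) μ³. -/
open Real MeasureTheory
open Filter

/-- The soliton profile `η(x; μ, a, θ, v) = e^{iθ} e^{iμ⁻¹v(x-a)} μ sech(μ(x-a))`. -/
noncomputable def soliton (μ a θ v x : ℝ) : ℂ :=
  Complex.exp (Complex.I * (θ : ℂ)) * Complex.exp (Complex.I * (((v / μ) * (x - a) : ℝ) : ℂ)) *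
    (μ : ℂ) * ((1 / Real.cosh (μ * (x - a)) : ℝ) : ℂ)


lemma my_hasDerivAt_tanh (x : ℝ) : HasDerivAt Real.tanh ((1 / Real.cosh x) ^ 2) x := by
  have h := (Real.hasDerivAt_sinh x).div (Real.hasDerivAt_cosh x) (Real.cosh_pos x).ne'
  have : Real.tanh = fun y => Real.sinh y / Real.cosh y := by
    funext y; exact Real.tanh_eq_sinh_div_cosh y
  rw [this]
  refine h.congr_deriv ?_
  have h2 := Real.cosh_sq_sub_sinh_sq x
  have := (Real.cosh_pos x).ne'
  field_simp
  nlinarith [Real.cosh_pos x]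

lemma cosh_lower (x : ℝ) : (1 + x ^ 2) / 8 ≤ Real.cosh x := by
  have h1 : Real.exp |x| / 2 ≤ Real.cosh x := by
    rw [← Real.cosh_abs, Real.cosh_eq]
    have := Real.exp_pos (-|x|)
    linarith
  have h2 : 1 + |x| / 2 ≤ Real.exp (|x| / 2) := by
    have := Real.add_one_le_exp (|x| / 2); linarith
  have h3 : Real.exp |x| = Real.exp (|x| / 2) ^ 2 := by
    rw [sq, ← Real.exp_add]; ring_nf
  have h4 := abs_nonneg x
  have h5 : |x| ^ 2 = x ^ 2 := sq_abs x
  nlinarith [Real.exp_pos (|x| / 2)]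

lemma sech_sq_le (x : ℝ) : (1 / Real.cosh x) ^ 2 ≤ 8 * (1 + x ^ 2)⁻¹ := by
  have hc := Real.cosh_pos x
  have h1 : (1 / Real.cosh x) ^ 2 ≤ 1 / Real.cosh x := by
    have := Real.one_le_cosh x
    rw [sq]
    nlinarith [one_div_pos.2 hc, (div_le_one hc).2 this]
  have h2 : 1 / Real.cosh x ≤ 8 / (1 + x ^ 2) := by
    rw [div_le_div_iff₀ hc (by positivity)]
    have := cosh_lower x
    nlinarith
  calc (1 / Real.cosh x) ^ 2 ≤ 1 / Real.cosh x := h1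
    _ ≤ 8 / (1 + x ^ 2) := h2
    _ = 8 * (1 + x ^ 2)⁻¹ := by ring

lemma integrable_sech_sq : Integrable (fun y : ℝ => (1 / Real.cosh y) ^ 2) := by
  refine (integrable_inv_one_add_sq.const_mul 8).mono' ?_ ?_
  · exact (Continuous.div continuous_const Real.continuous_cosh
      (fun y => (Real.cosh_pos y).ne')).pow 2 |>.aestronglyMeasurable
  · filter_upwards with y
    rw [Real.norm_eq_abs, abs_of_nonneg (by positivity)]
    exact sech_sq_le y

lemma integrable_sech_four : Integrable (fun y : ℝ => (1 / Real.cosh y) ^ 4) := by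
  refine integrable_sech_sq.mono' ?_ ?_
  · exact (Continuous.div continuous_const Real.continuous_cosh
      (fun y => (Real.cosh_pos y).ne')).pow 4 |>.aestronglyMeasurable
  · filter_upwards with y
    have hc := Real.cosh_pos y
    have h1 : 0 < 1 / Real.cosh y := by positivity
    have h2 : 1 / Real.cosh y ≤ 1 := by
      rw [div_le_one hc]; exact Real.one_le_cosh y
    rw [Real.norm_eq_abs, abs_of_nonneg (by positivity)]
    calc (1 / Real.cosh y) ^ 4 = ((1/Real.cosh y)^2) * ((1/Real.cosh y)^2) := by ring
      _ ≤ 1 * ((1/Real.cosh y)^2) := by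
          apply mul_le_mul_of_nonneg_right _ (by positivity)
          nlinarith
      _ = (1/Real.cosh y)^2 := by ring

lemma tendsto_tanh_atTop : Tendsto Real.tanh atTop (nhds 1) := by
  have key : ∀ x : ℝ, Real.tanh x = 1 - 2 / (Real.exp (2 * x) + 1) := by
    intro x
    rw [Real.tanh_eq_sinh_div_cosh, Real.sinh_eq, Real.cosh_eq]
    have h1 : Real.exp x > 0 := Real.exp_pos x
    have h2 : Real.exp (-x) > 0 := Real.exp_pos (-x)
    have h3 : Real.exp (2 * x) = Real.exp x * Real.exp x := by
      rw [← Real.exp_add]; ring_nf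
    have h4 : Real.exp x * Real.exp (-x) = 1 := by
      rw [← Real.exp_add]; simp
    have hd1 : Real.exp x + Real.exp (-x) ≠ 0 := by positivity
    have hd2 : Real.exp (2 * x) + 1 ≠ 0 := by positivity
    field_simp
    rw [mul_comm x 2, h3]; linear_combination (-2 * Real.exp x) * h4
  rw [show Real.tanh = fun x : ℝ => 1 - 2 / (Real.exp (2 * x) + 1) from funext key]
  have : Tendsto (fun x : ℝ => Real.exp (2 * x) + 1) atTop atTop :=
    (Real.tendsto_exp_atTop.comp (tendsto_id.const_mul_atTop two_pos)).atTop_add tendsto_const_nhds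
  have h0 : Tendsto (fun x : ℝ => 2 / (Real.exp (2 * x) + 1)) atTop (nhds 0) :=
    Tendsto.div_atTop tendsto_const_nhds this
  simpa using tendsto_const_nhds.sub h0

lemma tendsto_tanh_atBot : Tendsto Real.tanh atBot (nhds (-1)) := by
  have : Tendsto (fun x : ℝ => -Real.tanh (-x)) atBot (nhds (-1)) := by
    have := (tendsto_tanh_atTop.comp tendsto_neg_atBot_atTop).neg
    simpa using this
  simpa [Real.tanh_neg] using this

lemma tanh_sq (x : ℝ) : Real.tanh x ^ 2 = 1 - (1 / Real.cosh x) ^ 2 := by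
  have hc := (Real.cosh_pos x).ne'
  rw [Real.tanh_eq_sinh_div_cosh]
  have := Real.cosh_sq_sub_sinh_sq x
  field_simp
  nlinarith [Real.cosh_pos x]

lemma integral_sech_sq : ∫ y : ℝ, (1 / Real.cosh y) ^ 2 = 2 := by
  have := MeasureTheory.integral_of_hasDerivAt_of_tendsto
    (f := Real.tanh) (f' := fun y => (1 / Real.cosh y) ^ 2)
    (m := -1) (n := 1) (fun y => my_hasDerivAt_tanh y) integrable_sech_sq
    tendsto_tanh_atBot tendsto_tanh_atTop
  rw [this]; norm_num

lemma integral_sech_four : ∫ y : ℝ, (1 / Real.cosh y) ^ 4 = 4 / 3 := by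
  have hderiv : ∀ y : ℝ, HasDerivAt (fun x => Real.tanh x - Real.tanh x ^ 3 / 3)
      ((1 / Real.cosh y) ^ 4) y := by
    intro y
    have h := (my_hasDerivAt_tanh y).sub (((my_hasDerivAt_tanh y).pow 3).div_const 3)
    refine h.congr_deriv ?_
    have ht := tanh_sq y
    norm_num
    linear_combination (-(1/Real.cosh y)^2) * ht
  have htop : Tendsto (fun x => Real.tanh x - Real.tanh x ^ 3 / 3) atTop (nhds (2/3)) := by
    have h := tendsto_tanh_atTop.sub ((tendsto_tanh_atTop.pow 3).div_const 3)
    have h23 : (2:ℝ)/3 = 1 - 1^3/3 := by norm_num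
    rw [h23]; exact h
  have hbot : Tendsto (fun x => Real.tanh x - Real.tanh x ^ 3 / 3) atBot (nhds (-(2/3))) := by
    have h := tendsto_tanh_atBot.sub ((tendsto_tanh_atBot.pow 3).div_const 3)
    have h23 : (-(2/3) : ℝ) = -1 - (-1)^3/3 := by norm_num
    rw [h23]; exact h
  have := MeasureTheory.integral_of_hasDerivAt_of_tendsto hderiv integrable_sech_four hbot htop
  rw [this]; norm_num

lemma soliton_hasDerivAt (μ a θ v x : ℝ) (hμ : μ ≠ 0) :
    HasDerivAt (soliton μ a θ v)
      (Complex.exp (Complex.I * (θ : ℂ)) * Complex.exp (Complex.I * (((v / μ) * (x - a) : ℝ) : ℂ)) *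
        (((-(μ ^ 2 * Real.tanh (μ * (x - a)) * (1 / Real.cosh (μ * (x - a)))) : ℝ) : ℂ)
          + ((v * (1 / Real.cosh (μ * (x - a))) : ℝ) : ℂ) * Complex.I)) x := by
  set u := μ * (x - a) with hu
  have hφ : HasDerivAt (fun y : ℝ => Complex.I * (((v / μ) * (y - a) : ℝ) : ℂ))
      (Complex.I * ((v / μ : ℝ) : ℂ)) x := by
    have h1 : HasDerivAt (fun y : ℝ => (v / μ) * (y - a)) (v / μ) x := by
      simpa using ((hasDerivAt_id x).sub_const a).const_mul (v / μ)
    have h2 := h1.ofReal_comp (z := x)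
    simpa using h2.const_mul Complex.I
  have hE := hφ.cexp
  have hinner : HasDerivAt (fun y : ℝ => μ * (y - a)) μ x := by
    simpa using ((hasDerivAt_id x).sub_const a).const_mul μ
  have hcosh : HasDerivAt (fun y : ℝ => Real.cosh (μ * (y - a))) (Real.sinh u * μ) x :=
    by have := (Real.hasDerivAt_cosh u).comp x hinner; exact this
  have hs : HasDerivAt (fun y : ℝ => 1 / Real.cosh (μ * (y - a)))
      (-(μ * Real.tanh u * (1 / Real.cosh u))) x := by
    have h := hcosh.inv (Real.cosh_pos u).ne'
    simp only [one_div]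
    refine h.congr_deriv ?_
    rw [Real.tanh_eq_sinh_div_cosh]
    have := (Real.cosh_pos u).ne'
    field_simp
    ring
  have hS := hs.ofReal_comp (z := x)
  have h := ((hE.const_mul (Complex.exp (Complex.I * (θ : ℂ)))).mul_const ((μ : ℝ) : ℂ)).mul hS
  have : soliton μ a θ v = fun y : ℝ =>
      Complex.exp (Complex.I * (θ : ℂ)) * Complex.exp (Complex.I * (((v / μ) * (y - a) : ℝ) : ℂ))
        * ((μ : ℝ) : ℂ) * (((1 / Real.cosh (μ * (y - a)) : ℝ)) : ℂ) := rfl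
  rw [this]
  refine h.congr_deriv ?_
  have hμc : (μ : ℂ) ≠ 0 := by exact_mod_cast hμ
  simp only [Complex.ofReal_mul, Complex.ofReal_neg, Complex.ofReal_div, Complex.ofReal_one,
    Complex.ofReal_pow, one_div, Complex.ofReal_inv]
  generalize (Real.cosh u : ℂ) = c
  generalize (Real.tanh u : ℂ) = t
  field_simp
  ring

lemma soliton_deriv_norm_sq (μ a θ v x : ℝ) (hμ : 0 < μ) :
    ‖deriv (soliton μ a θ v) x‖ ^ 2
      = v ^ 2 * (1 / Real.cosh (μ * (x - a))) ^ 2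
        + μ ^ 4 * (Real.tanh (μ * (x - a)) ^ 2 * (1 / Real.cosh (μ * (x - a))) ^ 2) := by
  rw [(soliton_hasDerivAt μ a θ v x hμ.ne').deriv]
  rw [norm_mul, norm_mul]
  have h1 : ‖Complex.exp (Complex.I * (θ : ℂ))‖ = 1 := by
    rw [Complex.norm_exp]
    simp
  have h2 : ‖Complex.exp (Complex.I * (((v / μ) * (x - a) : ℝ) : ℂ))‖ = 1 := by
    rw [Complex.norm_exp]
    simp
  rw [h1, h2, one_mul, one_mul, Complex.sq_norm,
    Complex.normSq_add_mul_I]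
  ring

lemma soliton_norm_four (μ a θ v x : ℝ) (hμ : 0 < μ) :
    ‖soliton μ a θ v x‖ ^ 4 = μ ^ 4 * (1 / Real.cosh (μ * (x - a))) ^ 4 := by
  unfold soliton
  rw [norm_mul, norm_mul, norm_mul]
  have h1 : ‖Complex.exp (Complex.I * (θ : ℂ))‖ = 1 := by
    rw [Complex.norm_exp]; simp
  have h2 : ‖Complex.exp (Complex.I * (((v / μ) * (x - a) : ℝ) : ℂ))‖ = 1 := by
    rw [Complex.norm_exp]; simp
  have h3 : ‖((μ : ℝ) : ℂ)‖ = μ := by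
    rw [Complex.norm_real, Real.norm_eq_abs, abs_of_pos hμ]
  have h4 : ‖(((1 / Real.cosh (μ * (x - a)) : ℝ)) : ℂ)‖ = 1 / Real.cosh (μ * (x - a)) := by
    rw [Complex.norm_real, Real.norm_eq_abs, abs_of_pos (by positivity)]
  rw [h1, h2, h3, h4]
  ring

/-- The energy of the soliton profile:
`H(η(·; μ, a, θ, v)) = (1/4)∫|η'|² - (1/4)∫|η|⁴ = (1/2)μ⁻¹v² - (1/6)μ³`. -/
theorem soliton_energy (μ a θ v : ℝ) (hμ : 0 < μ) :
    (1 / 4) * (∫ x : ℝ, ‖deriv (soliton μ a θ v) x‖ ^ 2)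
      - (1 / 4) * (∫ x : ℝ, ‖soliton μ a θ v x‖ ^ 4)
      = (1 / 2) * μ⁻¹ * v ^ 2 - (1 / 6) * μ ^ 3 := by
  set F1 : ℝ → ℝ := fun y => (v ^ 2 + μ ^ 4) * (1 / Real.cosh y) ^ 2
    - μ ^ 4 * (1 / Real.cosh y) ^ 4 with hF1def
  set F2 : ℝ → ℝ := fun y => μ ^ 4 * (1 / Real.cosh y) ^ 4 with hF2def
  have hF1 : ∫ y : ℝ, F1 y = (v ^ 2 + μ ^ 4) * 2 - μ ^ 4 * (4 / 3) := by
    rw [hF1def]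
    rw [integral_sub (integrable_sech_sq.const_mul _) (integrable_sech_four.const_mul _),
      integral_const_mul, integral_const_mul, integral_sech_sq, integral_sech_four]
  have hF2 : ∫ y : ℝ, F2 y = μ ^ 4 * (4 / 3) := by
    rw [hF2def, integral_const_mul, integral_sech_four]
  have e1 : (∫ x : ℝ, ‖deriv (soliton μ a θ v) x‖ ^ 2) = ∫ x : ℝ, F1 (μ * (x - a)) := by
    congr 1
    funext x
    rw [soliton_deriv_norm_sq μ a θ v x hμ, hF1def]
    simp only
    rw [tanh_sq]
    ring
  have e2 : (∫ x : ℝ, ‖soliton μ a θ v x‖ ^ 4) = ∫ x : ℝ, F2 (μ * (x - a)) := by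
    congr 1
    funext x
    rw [soliton_norm_four μ a θ v x hμ, hF2def]
  have sub1 : ∀ F : ℝ → ℝ, (∫ x : ℝ, F (μ * (x - a))) = μ⁻¹ * ∫ y : ℝ, F y := by
    intro F
    have h1 : (∫ x : ℝ, F (μ * (x - a))) = ∫ x : ℝ, F (μ * x) :=
      integral_sub_right_eq_self (fun y : ℝ => F (μ * y)) a
    rw [h1, MeasureTheory.Measure.integral_comp_mul_left F μ, abs_of_pos (inv_pos.2 hμ),
      smul_eq_mul]
  rw [e1, e2, sub1 F1, sub1 F2, hF1, hF2]
  field_simp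
  ring
end

section
/- Let φ(x) = sech x and let S be the real-linear operator S ρ = (1/2)ρ - (1/2)ρ'' - 2φ²ρ - φ² conj(ρ). Then the kernel of S acting on H²(ℝ, ℂ) is exactly the real span of φ' and iφ; that is, ρ ∈ H²(ℝ, ℂ) satisfies Sρ = 0 if and only if ρ = c₁ φ' + c₂ i φ for some real numbers c₁, c₂. -/
open Real MeasureTheory

/-- The ground-state profile `φ(x) = sech x`, as a complex-valued function. -/
noncomputable def phiC (x : ℝ) : ℂ := ((1 / Real.cosh x : ℝ) : ℂ)

/-- The real-linear linearized operator `Sρ = (1/2)ρ - (1/2)ρ″ - 2φ²ρ - φ² conj(ρ)`. -/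
noncomputable def Sop (ρ : ℝ → ℂ) (x : ℝ) : ℂ :=
  (1 / 2) * ρ x - (1 / 2) * deriv (deriv ρ) x
    - 2 * (phiC x) ^ 2 * ρ x - (phiC x) ^ 2 * (starRingEnd ℂ) (ρ x)

section Aux

open Filter Set

noncomputable def phiR (x : ℝ) : ℝ := 1 / Real.cosh x
noncomputable def phiR' (x : ℝ) : ℝ := -Real.sinh x / Real.cosh x ^ 2

lemma coshne (x : ℝ) : Real.cosh x ≠ 0 := (Real.cosh_pos x).ne'

lemma hasDerivAt_phiR (x : ℝ) : HasDerivAt phiR (phiR' x) x := by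
  have h := (Real.hasDerivAt_cosh x).inv (coshne x)
  have : phiR = fun y => (Real.cosh y)⁻¹ := by funext y; simp [phiR, one_div]
  rw [this]
  refine h.congr_deriv ?_; simp [phiR', neg_div]

lemma hasDerivAt_phiR' (x : ℝ) : HasDerivAt phiR' (phiR x - 2 * phiR x ^ 3) x := by
  have h := ((Real.hasDerivAt_sinh x).neg.div ((Real.hasDerivAt_cosh x).pow 2)
    (pow_ne_zero 2 (coshne x)))
  have : phiR' = fun y => -Real.sinh y / Real.cosh y ^ 2 := rfl
  rw [this]
  refine h.congr_deriv ?_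
  have hc := coshne x
  have hs : Real.sinh x ^ 2 = Real.cosh x ^ 2 - 1 := by
    have := Real.cosh_sq_sub_sinh_sq x; nlinarith
  simp only [Pi.pow_apply, Pi.neg_apply, Nat.cast_ofNat, phiR] at *
  field_simp [phiR]
  ring_nf
  rw [hs]; ring

lemma hasDerivAt_phiR'' (x : ℝ) :
    HasDerivAt (fun y => phiR y - 2 * phiR y ^ 3) ((1 - 6 * phiR x ^ 2) * phiR' x) x := by
  have h := (hasDerivAt_phiR x).sub (((hasDerivAt_phiR x).pow 3).const_mul 2)
  refine h.congr_deriv ?_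
  push_cast
  ring

lemma phiR_pos (x : ℝ) : 0 < phiR x := by
  unfold phiR; positivity

lemma phiR_le_one (x : ℝ) : phiR x ≤ 1 := by
  unfold phiR
  rw [div_le_one (Real.cosh_pos x)]
  exact Real.one_le_cosh x

lemma phiR_zero : phiR 0 = 1 := by simp [phiR]

lemma phiR'_zero : phiR' 0 = 0 := by simp [phiR']

lemma abs_phiR'_le (x : ℝ) : |phiR' x| ≤ phiR x := by
  unfold phiR phiR'
  rw [abs_div, abs_neg, abs_of_nonneg (by positivity : (0:ℝ) ≤ Real.cosh x ^ 2)]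
  rw [div_le_div_iff₀ (by positivity) (Real.cosh_pos x)]
  have h1 : |Real.sinh x| ≤ Real.cosh x := by
    have := Real.cosh_sq_sub_sinh_sq x
    have hc := Real.cosh_pos x
    rw [abs_le]
    constructor <;> nlinarith [sq_abs (Real.sinh x), abs_nonneg (Real.sinh x)]
  have hc := Real.cosh_pos x
  nlinarith [abs_nonneg (Real.sinh x)]

lemma tendsto_phiR_atTop : Tendsto phiR atTop (nhds 0) := by
  apply squeeze_zero (fun x => (phiR_pos x).le) (g := fun x => 2 * Real.exp (-x))
  · intro x
    unfold phiR
    rw [div_le_iff₀ (Real.cosh_pos x)]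
    rw [Real.cosh_eq]
    have h1 : Real.exp (-x) * Real.exp x = 1 := by
      rw [← Real.exp_add]; simp
    nlinarith [Real.exp_pos (-x), Real.exp_pos x]
  · have : Tendsto (fun x : ℝ => Real.exp (-x)) atTop (nhds 0) :=
      Real.tendsto_exp_neg_atTop_nhds_zero
    simpa using this.const_mul 2

lemma tendsto_phiR_atBot : Tendsto phiR atBot (nhds 0) := by
  apply squeeze_zero (fun x => (phiR_pos x).le) (g := fun x => 2 * Real.exp x)
  · intro x
    unfold phiR
    rw [div_le_iff₀ (Real.cosh_pos x)]
    rw [Real.cosh_eq]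
    have h1 : Real.exp x * Real.exp (-x) = 1 := by
      rw [← Real.exp_add]; simp
    nlinarith [Real.exp_pos (-x), Real.exp_pos x]
  · simpa using Real.tendsto_exp_atBot.const_mul 2

lemma tendsto_phiR'_atTop : Tendsto phiR' atTop (nhds 0) := by
  apply squeeze_zero_norm (fun x => ?_) tendsto_phiR_atTop
  rw [Real.norm_eq_abs]; exact abs_phiR'_le x

lemma tendsto_phiR'_atBot : Tendsto phiR' atBot (nhds 0) := by
  apply squeeze_zero_norm (fun x => ?_) tendsto_phiR_atBot
  rw [Real.norm_eq_abs]; exact abs_phiR'_le x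

lemma tendsto_phiR''_atTop : Tendsto (fun y => phiR y - 2 * phiR y ^ 3) atTop (nhds 0) := by
  have := tendsto_phiR_atTop.sub ((tendsto_phiR_atTop.pow 3).const_mul 2)
  simpa using this

lemma tendsto_phiR''_atBot : Tendsto (fun y => phiR y - 2 * phiR y ^ 3) atBot (nhds 0) := by
  have := tendsto_phiR_atBot.sub ((tendsto_phiR_atBot.pow 3).const_mul 2)
  simpa using this

lemma limit_eq_zero_of_integrable {g : ℝ → ℝ} {l : Filter ℝ} [l.NeBot]
    (hg : Integrable g volume) (h0 : ∀ x, 0 ≤ g x) {L : ℝ}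
    (hT : Filter.Tendsto g l (nhds L)) (hl : ∀ s ∈ l, volume s = ⊤) : L = 0 := by
  by_contra hL
  have hLnn : 0 ≤ L := ge_of_tendsto' hT h0
  have hLpos : 0 < L := lt_of_le_of_ne hLnn (Ne.symm hL)
  have hev : ∀ᶠ x in l, L / 2 ≤ g x :=
    hT.eventually (eventually_ge_nhds (by linarith))
  have hsub : {x : ℝ | L / 2 ≤ g x} ∈ l := hev
  have hfin := hg.measure_ge_lt_top (by linarith : (0:ℝ) < L / 2)
  rw [hl _ hsub] at hfin
  exact (lt_irrefl _ hfin)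

lemma atTop_infinite : ∀ s ∈ (atTop : Filter ℝ), volume s = ⊤ := by
  intro s hs
  obtain ⟨a, ha⟩ := mem_atTop_sets.mp hs
  have : Ici a ⊆ s := fun x hx => ha x hx
  exact top_le_iff.mp (le_trans (le_of_eq Real.volume_Ici.symm) (measure_mono this))

lemma atBot_infinite : ∀ s ∈ (atBot : Filter ℝ), volume s = ⊤ := by
  intro s hs
  obtain ⟨a, ha⟩ := mem_atBot_sets.mp hs
  have : Iic a ⊆ s := fun x hx => ha x hx
  exact top_le_iff.mp (le_trans (le_of_eq Real.volume_Iic.symm) (measure_mono this))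

lemma decay_of_H1 (f : ℝ → ℝ) (hf : Differentiable ℝ f)
    (h2 : MemLp f 2 volume) (h2' : MemLp (deriv f) 2 volume) :
    Filter.Tendsto f atTop (nhds 0) ∧ Filter.Tendsto f atBot (nhds 0) := by
  have hsq : Integrable (fun x => f x ^ 2) volume := h2.integrable_sq
  have hsq' : Integrable (fun x => deriv f x ^ 2) volume := h2'.integrable_sq
  set P : ℝ → ℝ := fun x => 2 * (f x * deriv f x) with hP
  have hPmeas : AEStronglyMeasurable P volume := by
    exact ((hf.continuous.aestronglyMeasurable.mul h2'.1).const_mul 2)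
  have hPint : Integrable P volume := by
    refine Integrable.mono' (hsq.add hsq') hPmeas (Filter.Eventually.of_forall fun x => ?_)
    have := abs_mul (f x) (deriv f x)
    have h1 : |P x| = 2 * (|f x| * |deriv f x|) := by
      rw [hP]; simp [abs_mul, abs_of_nonneg, mul_assoc]
    rw [Real.norm_eq_abs, h1]
    simp only [Pi.add_apply]
    nlinarith [sq_nonneg (|f x| - |deriv f x|), sq_abs (f x), sq_abs (deriv f x)]
  have hDg : ∀ x, HasDerivAt (fun y => f y ^ 2) (P x) x := by
    intro x
    have := ((hf x).hasDerivAt).pow 2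
    exact this.congr_deriv (by simp [hP, mul_comm, mul_assoc, mul_left_comm])
  have hFTC : ∀ b : ℝ, ∫ t in (0:ℝ)..b, P t = f b ^ 2 - f 0 ^ 2 := by
    intro b
    exact intervalIntegral.integral_eq_sub_of_hasDerivAt (fun t _ => hDg t)
      (hPint.intervalIntegrable)
  constructor
  · have hTi : Filter.Tendsto (fun b : ℝ => ∫ t in (0:ℝ)..b, P t) atTop
        (nhds (∫ t in Ioi (0:ℝ), P t)) :=
      intervalIntegral_tendsto_integral_Ioi 0 hPint.integrableOn tendsto_id
    have hTg : Filter.Tendsto (fun b => f b ^ 2) atTop (nhds (f 0 ^ 2 + ∫ t in Ioi (0:ℝ), P t)) := by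
      have := hTi.const_add (f 0 ^ 2)
      refine this.congr fun b => ?_
      rw [hFTC b]; ring
    have hL0 : f 0 ^ 2 + (∫ t in Ioi (0:ℝ), P t) = 0 :=
      limit_eq_zero_of_integrable hsq (fun x => sq_nonneg _) hTg atTop_infinite
    rw [hL0] at hTg
    have habs : Filter.Tendsto (fun b => |f b|) atTop (nhds 0) := by
      have h0 := (Real.continuous_sqrt.tendsto 0).comp hTg
      rw [Real.sqrt_zero] at h0
      refine h0.congr fun b => ?_
      simp [Function.comp, Real.sqrt_sq_eq_abs]
    exact (tendsto_zero_iff_abs_tendsto_zero f).mpr habs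
  · have hTi : Filter.Tendsto (fun a : ℝ => ∫ t in a..(0:ℝ), P t) atBot
        (nhds (∫ t in Iic (0:ℝ), P t)) :=
      intervalIntegral_tendsto_integral_Iic 0 hPint.integrableOn tendsto_id
    have hTg : Filter.Tendsto (fun a => f a ^ 2) atBot (nhds (f 0 ^ 2 - ∫ t in Iic (0:ℝ), P t)) := by
      have := (tendsto_const_nhds (x := f 0 ^ 2) (f := atBot)).sub hTi
      refine this.congr fun a => ?_
      have h1 : ∫ t in a..(0:ℝ), P t = f 0 ^ 2 - f a ^ 2 := by
        rw [intervalIntegral.integral_symm 0 a, hFTC a]; ring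
      rw [h1]; ring
    have hL0 : f 0 ^ 2 - (∫ t in Iic (0:ℝ), P t) = 0 :=
      limit_eq_zero_of_integrable hsq (fun x => sq_nonneg _) hTg atBot_infinite
    rw [hL0] at hTg
    have habs : Filter.Tendsto (fun b => |f b|) atBot (nhds 0) := by
      have h0 := (Real.continuous_sqrt.tendsto 0).comp hTg
      rw [Real.sqrt_zero] at h0
      refine h0.congr fun b => ?_
      simp [Function.comp, Real.sqrt_sq_eq_abs]
    exact (tendsto_zero_iff_abs_tendsto_zero f).mpr habs

lemma ode_unique {q f g f' g' : ℝ → ℝ}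
    (hq : ∀ x, |q x| ≤ 5)
    (hf : ∀ x, HasDerivAt f (f' x) x) (hf' : ∀ x, HasDerivAt f' (q x * f x) x)
    (hg : ∀ x, HasDerivAt g (g' x) x) (hg' : ∀ x, HasDerivAt g' (q x * g x) x)
    (h0 : f 0 = g 0) (h0' : f' 0 = g' 0) : ∀ x, f x = g x := by
  set h : ℝ → ℝ := fun x => f x - g x with hh
  set h1 : ℝ → ℝ := fun x => f' x - g' x with hh1
  have hd : ∀ x, HasDerivAt h (h1 x) x := fun x => (hf x).sub (hg x)
  have hd1 : ∀ x, HasDerivAt h1 (q x * h x) x := by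
    intro x
    have := (hf' x).sub (hg' x)
    refine this.congr_deriv ?_
    simp [hh]; ring
  set E : ℝ → ℝ := fun x => h x ^ 2 + h1 x ^ 2 with hE
  set E' : ℝ → ℝ := fun x => 2 * h x * h1 x + 2 * h1 x * (q x * h x) with hE'
  have hdE : ∀ x, HasDerivAt E (E' x) x := by
    intro x
    have := (((hd x).pow 2)).add ((hd1 x).pow 2)
    refine this.congr_deriv ?_
    simp [hE']
    try ring
  have hEnn : ∀ x, 0 ≤ E x := fun x => by positivity
  have hbound : ∀ x, |E' x| ≤ 6 * E x := by
    intro x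
    have hqx := hq x
    have habs : |E' x| ≤ 2 * |h x| * |h1 x| * (1 + |q x|) := by
      rw [hE']
      calc |2 * h x * h1 x + 2 * h1 x * (q x * h x)|
          ≤ |2 * h x * h1 x| + |2 * h1 x * (q x * h x)| := abs_add_le _ _
        _ ≤ 2 * |h x| * |h1 x| * (1 + |q x|) := by
            simp [abs_mul]; nlinarith [abs_nonneg (h x), abs_nonneg (h1 x), abs_nonneg (q x)]
    refine habs.trans ?_
    have h2 : 2 * |h x| * |h1 x| ≤ h x ^ 2 + h1 x ^ 2 := by
      nlinarith [sq_nonneg (|h x| - |h1 x|), sq_abs (h x), sq_abs (h1 x)]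
    have : (1 + |q x|) ≤ 6 := by linarith
    have hnn : 0 ≤ 2 * |h x| * |h1 x| := by positivity
    calc 2 * |h x| * |h1 x| * (1 + |q x|) ≤ (h x ^ 2 + h1 x ^ 2) * 6 := by
          nlinarith [abs_nonneg (q x)]
      _ = 6 * E x := by rw [hE]; ring
  have key : ∀ x, E x = 0 := by
    intro x
    rcases le_total 0 x with hx | hx
    · set G : ℝ → ℝ := fun t => E t * Real.exp (-6 * t) with hG
      have hdG : ∀ t, HasDerivAt G ((E' t - 6 * E t) * Real.exp (-6 * t)) t := by
        intro t
        have he : HasDerivAt (fun t : ℝ => Real.exp (-6 * t)) (-6 * Real.exp (-6 * t)) t := by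
          have := (Real.hasDerivAt_exp (-6 * t)).comp t ((hasDerivAt_id t).const_mul (-6))
          simpa [Function.comp_def, mul_comm] using this
        have := (hdE t).mul he
        refine this.congr_deriv ?_
        ring
      have hanti : Antitone G := by
        refine antitone_of_deriv_nonpos (fun t => (hdG t).differentiableAt) fun t => ?_
        rw [(hdG t).deriv]
        have := (abs_le.mp (hbound t)).2
        have hexp : (0:ℝ) < Real.exp (-6 * t) := Real.exp_pos _
        nlinarith
      have hG0 : G 0 = E 0 := by simp [hG]
      have hE0 : E 0 = 0 := by
        simp [hE, hh, hh1, h0, h0']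
      have := hanti hx
      rw [hG0, hE0] at this
      have hexp : (0:ℝ) < Real.exp (-6 * x) := Real.exp_pos _
      have hEx : E x ≤ 0 := by
        by_contra hc
        push_neg at hc
        have : 0 < G x := by rw [hG]; positivity
        linarith
      linarith [hEnn x]
    · set G : ℝ → ℝ := fun t => E t * Real.exp (6 * t) with hG
      have hdG : ∀ t, HasDerivAt G ((E' t + 6 * E t) * Real.exp (6 * t)) t := by
        intro t
        have he : HasDerivAt (fun t : ℝ => Real.exp (6 * t)) (6 * Real.exp (6 * t)) t := by
          have := (Real.hasDerivAt_exp (6 * t)).comp t ((hasDerivAt_id t).const_mul 6)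
          simpa [Function.comp_def, mul_comm] using this
        have := (hdE t).mul he
        refine this.congr_deriv ?_
        ring
      have hmono : Monotone G := by
        refine monotone_of_deriv_nonneg (fun t => (hdG t).differentiableAt) fun t => ?_
        rw [(hdG t).deriv]
        have := (abs_le.mp (hbound t)).1
        have hexp : (0:ℝ) < Real.exp (6 * t) := Real.exp_pos _
        nlinarith
      have hG0 : G 0 = E 0 := by simp [hG]
      have hE0 : E 0 = 0 := by simp [hE, hh, hh1, h0, h0']
      have := hmono hx
      rw [hG0, hE0] at this
      have hexp : (0:ℝ) < Real.exp (6 * x) := Real.exp_pos _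
      have hEx : E x ≤ 0 := by
        by_contra hc
        push_neg at hc
        have : 0 < G x := by rw [hG]; positivity
        linarith
      linarith [hEnn x]
  intro x
  have := key x
  have hExx : h x ^ 2 + h1 x ^ 2 = 0 := this
  have hh0 : h x = 0 := by nlinarith [sq_nonneg (h x), sq_nonneg (h1 x)]
  have : f x - g x = 0 := hh0
  linarith

lemma wronskian_vanish {q f g f' g' : ℝ → ℝ}
    (hf : ∀ x, HasDerivAt f (f' x) x) (hf' : ∀ x, HasDerivAt f' (q x * f x) x)
    (hg : ∀ x, HasDerivAt g (g' x) x) (hg' : ∀ x, HasDerivAt g' (q x * g x) x)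
    (hft : Tendsto f atTop (nhds 0)) (hf't : Tendsto f' atTop (nhds 0))
    (hgt : Tendsto g atTop (nhds 0)) (hg't : Tendsto g' atTop (nhds 0)) :
    ∀ x, f x * g' x - f' x * g x = 0 := by
  set W : ℝ → ℝ := fun x => f x * g' x - f' x * g x with hW
  have hdW : ∀ x, HasDerivAt W 0 x := by
    intro x
    have := ((hf x).mul (hg' x)).sub ((hf' x).mul (hg x))
    refine this.congr_deriv ?_
    ring
  have hconst : ∀ x y, W x = W y :=
    is_const_of_deriv_eq_zero (fun x => (hdW x).differentiableAt) (fun x => (hdW x).deriv)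
  have hWt : Tendsto W atTop (nhds 0) := by
    have := (hft.mul hg't).sub (hf't.mul hgt)
    simpa using this
  intro x
  have hWc : Tendsto W atTop (nhds (W x)) :=
    tendsto_const_nhds.congr fun y => (hconst x y)
  exact tendsto_nhds_unique hWc hWt

end Aux

/-- The kernel of `S` on `H²(ℝ,ℂ)` is exactly the real span of `φ'` and `iφ`. -/
theorem kernel_of_S (ρ : ℝ → ℂ)
    (hρ1 : Differentiable ℝ ρ) (hρ2 : Differentiable ℝ (deriv ρ))
    (hL2 : MemLp ρ 2 volume) (hL2' : MemLp (deriv ρ) 2 volume)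
    (hL2'' : MemLp (deriv (deriv ρ)) 2 volume) :
    (∀ x : ℝ, Sop ρ x = 0) ↔
      ∃ c₁ c₂ : ℝ, ∀ x : ℝ, ρ x = (c₁ : ℂ) * deriv phiC x + (c₂ : ℂ) * Complex.I * phiC x := by
  have hphiC_eq : phiC = fun x => ((phiR x : ℝ) : ℂ) := rfl
  have hdphiC : ∀ x, HasDerivAt phiC (((phiR' x : ℝ)) : ℂ) x := by
    intro x
    rw [hphiC_eq]
    exact (hasDerivAt_phiR x).ofReal_comp
  have hderiv_phiC : ∀ x, deriv phiC x = ((phiR' x : ℝ) : ℂ) := fun x => (hdphiC x).deriv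
  constructor
  · intro hS
    -- real and imaginary parts
    set u : ℝ → ℝ := fun x => (ρ x).re with hu_def
    set v : ℝ → ℝ := fun x => (ρ x).im with hv_def
    set u1 : ℝ → ℝ := fun x => (deriv ρ x).re with hu1_def
    set v1 : ℝ → ℝ := fun x => (deriv ρ x).im with hv1_def
    have hu : ∀ x, HasDerivAt u (u1 x) x := fun x =>
      Complex.reCLM.hasFDerivAt.comp_hasDerivAt x (hρ1 x).hasDerivAt
    have hv : ∀ x, HasDerivAt v (v1 x) x := fun x =>
      Complex.imCLM.hasFDerivAt.comp_hasDerivAt x (hρ1 x).hasDerivAt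
    have hu1 : ∀ x, HasDerivAt u1 ((deriv (deriv ρ) x).re) x := fun x =>
      Complex.reCLM.hasFDerivAt.comp_hasDerivAt x (hρ2 x).hasDerivAt
    have hv1 : ∀ x, HasDerivAt v1 ((deriv (deriv ρ) x).im) x := fun x =>
      Complex.imCLM.hasFDerivAt.comp_hasDerivAt x (hρ2 x).hasDerivAt
    -- the ODEs
    have hode : ∀ x, (deriv (deriv ρ) x).re = (1 - 6 * phiR x ^ 2) * u x ∧
        (deriv (deriv ρ) x).im = (1 - 2 * phiR x ^ 2) * v x := by
      intro x
      have h := Complex.ext_iff.mp (hS x)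
      simp only [Sop, phiC, Complex.sub_re, Complex.sub_im, Complex.mul_re, Complex.mul_im,
        Complex.ofReal_re, Complex.ofReal_im, Complex.conj_re, Complex.conj_im,
        ← Complex.ofReal_pow, Complex.zero_re, Complex.zero_im] at h
      obtain ⟨h1, h2⟩ := h
      norm_num at h1 h2
      unfold phiR
      constructor
      · linear_combination (-2 : ℝ) * h1
      · linear_combination (-2 : ℝ) * h2
    set q : ℝ → ℝ := fun x => 1 - 6 * phiR x ^ 2 with hq_def
    set qv : ℝ → ℝ := fun x => 1 - 2 * phiR x ^ 2 with hqv_def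
    have hq5 : ∀ x, |q x| ≤ 5 := by
      intro x
      have hqx : q x = 1 - 6 * phiR x ^ 2 := rfl
      rw [hqx, abs_le]
      have h1 := phiR_pos x
      have h2 := phiR_le_one x
      constructor <;> nlinarith
    have hqv5 : ∀ x, |qv x| ≤ 5 := by
      intro x
      have hqx : qv x = 1 - 2 * phiR x ^ 2 := rfl
      rw [hqx, abs_le]
      have h1 := phiR_pos x
      have h2 := phiR_le_one x
      constructor <;> nlinarith
    have hu1' : ∀ x, HasDerivAt u1 (q x * u x) x := by
      intro x
      have := hu1 x
      rwa [(hode x).1] at this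
    have hv1' : ∀ x, HasDerivAt v1 (qv x * v x) x := by
      intro x
      have := hv1 x
      rwa [(hode x).2] at this
    -- L² facts
    have hmu : MemLp u 2 volume := by simpa using hL2.re
    have hmv : MemLp v 2 volume := by simpa using hL2.im
    have hmu1 : MemLp u1 2 volume := by simpa using hL2'.re
    have hmv1 : MemLp v1 2 volume := by simpa using hL2'.im
    have hmu2 : MemLp (fun x => (deriv (deriv ρ) x).re) 2 volume := by simpa using hL2''.re
    have hmv2 : MemLp (fun x => (deriv (deriv ρ) x).im) 2 volume := by simpa using hL2''.im
    have hderiv_u : deriv u = u1 := funext fun x => (hu x).deriv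
    have hderiv_v : deriv v = v1 := funext fun x => (hv x).deriv
    have hderiv_u1 : deriv u1 = fun x => (deriv (deriv ρ) x).re := funext fun x => (hu1 x).deriv
    have hderiv_v1 : deriv v1 = fun x => (deriv (deriv ρ) x).im := funext fun x => (hv1 x).deriv
    -- decay
    have hud := decay_of_H1 u (fun x => (hu x).differentiableAt) hmu (hderiv_u ▸ hmu1)
    have hvd := decay_of_H1 v (fun x => (hv x).differentiableAt) hmv (hderiv_v ▸ hmv1)
    have hu1d := decay_of_H1 u1 (fun x => (hu1 x).differentiableAt) hmu1 (hderiv_u1 ▸ hmu2)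
    have hv1d := decay_of_H1 v1 (fun x => (hv1 x).differentiableAt) hmv1 (hderiv_v1 ▸ hmv2)
    -- the explicit kernel elements
    have hy : ∀ x, HasDerivAt phiR' ((fun y => phiR y - 2 * phiR y ^ 3) x) x := hasDerivAt_phiR'
    have hy' : ∀ x, HasDerivAt (fun y => phiR y - 2 * phiR y ^ 3) (q x * phiR' x) x :=
      hasDerivAt_phiR''
    have hz : ∀ x, HasDerivAt phiR (phiR' x) x := hasDerivAt_phiR
    have hz' : ∀ x, HasDerivAt phiR' (qv x * phiR x) x := by
      intro x
      have := hasDerivAt_phiR' x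
      refine this.congr_deriv ?_
      rw [hqv_def]; ring
    -- Wronskian for u against phiR'
    have hWu := wronskian_vanish (q := q) hu hu1' hy hy'
      hud.1 hu1d.1 tendsto_phiR'_atTop tendsto_phiR''_atTop
    -- Wronskian for v against phiR
    have hWv := wronskian_vanish (q := qv) hv hv1' hz hz'
      hvd.1 hv1d.1 tendsto_phiR_atTop tendsto_phiR'_atTop
    -- initial conditions
    have hu0 : u 0 = 0 := by
      have := hWu 0
      simp only [phiR_zero, phiR'_zero] at this
      linarith [this]
    have hv10 : v1 0 = 0 := by
      have := hWv 0
      simp only [phiR_zero, phiR'_zero] at this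
      linarith [this]
    -- identify u and v
    refine ⟨-u1 0, v 0, ?_⟩
    have huc : ∀ x, u x = (-u1 0) * phiR' x := by
      refine ode_unique (q := q) (f' := u1) (g' := fun x => (-u1 0) * (phiR x - 2 * phiR x ^ 3))
        hq5 hu hu1' (fun x => (hasDerivAt_phiR' x).const_mul _) ?_ ?_ ?_
      · intro x
        have := (hasDerivAt_phiR'' x).const_mul (-u1 0)
        refine this.congr_deriv ?_
        rw [hq_def]; ring
      · show u 0 = -u1 0 * phiR' 0
        rw [hu0, phiR'_zero]; ring
      · show u1 0 = -u1 0 * (phiR 0 - 2 * phiR 0 ^ 3)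
        rw [phiR_zero]; ring
    have hvc : ∀ x, v x = (v 0) * phiR x := by
      refine ode_unique (q := qv) (f' := v1) (g' := fun x => (v 0) * phiR' x)
        hqv5 hv hv1' (fun x => (hasDerivAt_phiR x).const_mul _) ?_ ?_ ?_
      · intro x
        have := (hz' x).const_mul (v 0)
        refine this.congr_deriv ?_
        ring
      · show v 0 = v 0 * phiR 0
        rw [phiR_zero]; ring
      · show v1 0 = v 0 * phiR' 0
        rw [hv10, phiR'_zero]; ring
    intro x
    rw [hderiv_phiC x]
    have : ρ x = Complex.ofReal (u x) + Complex.ofReal (v x) * Complex.I := by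
      rw [hu_def, hv_def]
      exact (Complex.re_add_im (ρ x)).symm
    rw [this, huc x, hvc x, hphiC_eq]
    push_cast
    ring
  · rintro ⟨c₁, c₂, h⟩
    have hρeq : ρ = fun x => (c₁ : ℂ) * ((phiR' x : ℝ) : ℂ)
        + (c₂ : ℂ) * Complex.I * ((phiR x : ℝ) : ℂ) := by
      funext x
      rw [h x, hderiv_phiC x, hphiC_eq]
    have hF : ∀ x, HasDerivAt (fun x => (c₁ : ℂ) * ((phiR' x : ℝ) : ℂ)
        + (c₂ : ℂ) * Complex.I * ((phiR x : ℝ) : ℂ))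
        ((c₁ : ℂ) * (((phiR x - 2 * phiR x ^ 3 : ℝ)) : ℂ)
          + (c₂ : ℂ) * Complex.I * ((phiR' x : ℝ) : ℂ)) x := by
      intro x
      exact ((hasDerivAt_phiR' x).ofReal_comp.const_mul _).add
        ((hasDerivAt_phiR x).ofReal_comp.const_mul _)
    have hderiv1 : deriv ρ = fun x => (c₁ : ℂ) * (((phiR x - 2 * phiR x ^ 3 : ℝ)) : ℂ)
        + (c₂ : ℂ) * Complex.I * ((phiR' x : ℝ) : ℂ) := by
      funext x
      rw [hρeq]
      exact (hF x).deriv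
    have hF1 : ∀ x, HasDerivAt (fun x => (c₁ : ℂ) * (((phiR x - 2 * phiR x ^ 3 : ℝ)) : ℂ)
        + (c₂ : ℂ) * Complex.I * ((phiR' x : ℝ) : ℂ))
        ((c₁ : ℂ) * ((((1 - 6 * phiR x ^ 2) * phiR' x : ℝ)) : ℂ)
          + (c₂ : ℂ) * Complex.I * (((phiR x - 2 * phiR x ^ 3 : ℝ)) : ℂ)) x := by
      intro x
      exact ((hasDerivAt_phiR'' x).ofReal_comp.const_mul _).add
        ((hasDerivAt_phiR' x).ofReal_comp.const_mul _)
    have hderiv2 : ∀ x, deriv (deriv ρ) x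
        = (c₁ : ℂ) * ((((1 - 6 * phiR x ^ 2) * phiR' x : ℝ)) : ℂ)
          + (c₂ : ℂ) * Complex.I * (((phiR x - 2 * phiR x ^ 3 : ℝ)) : ℂ) := by
      intro x
      rw [hderiv1]
      exact (hF1 x).deriv
    intro x
    rw [Sop, hderiv2 x, hρeq, hphiC_eq]
    simp only [map_add, map_mul, Complex.conj_ofReal, Complex.conj_I]
    push_cast
    ring
end

section
/- Let φ(x) = sech x. Then the leading-order tail-interaction integrals between two solitons at separation 2a satisfy: lim_{a → ∞} e^{2a} ∫_ℝ φ³(x-a) φ(x+a) dx = 4, and lim_{a → ∞} e^{2a} ∫_ℝ (φ³)'(x-a) φ(x+a) dx = 4, where (φ³)' denotes the derivative of x ↦ φ(x)³. (These are the values α(0,a) ≈ 4e^{-2a} and β(0,a) ≈ 4e^{-2a} of the interaction integrals computed in the paper's appendix.) -/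
open Real Filter MeasureTheory Topology

namespace TailInteractionAux

lemma cosh_ne (y : ℝ) : Real.cosh y ≠ 0 := (Real.cosh_pos y).ne'

noncomputable def gg (y : ℝ) : ℝ := 16 * Real.exp (2*y) / (Real.exp (2*y) + 1) ^ 3
noncomputable def Fa (y : ℝ) : ℝ := -4 * ((Real.exp (2*y) + 1) ^ 2)⁻¹
noncomputable def K (a y : ℝ) : ℝ := Real.exp (2*a) * (1 / Real.cosh (y + 2*a))

lemma gid (y : ℝ) : (1 / Real.cosh y) ^ 3 * (2 * Real.exp (-y)) = gg y := by
  unfold gg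
  rw [Real.cosh_eq, Real.exp_neg, show (2:ℝ)*y = y + y by ring, Real.exp_add]
  have h := Real.exp_pos y
  have h2 : Real.exp y + (Real.exp y)⁻¹ ≠ 0 := by positivity
  field_simp
  ring

lemma hasDerivAt_Fa (y : ℝ) : HasDerivAt Fa (gg y) y := by
  have h1 : HasDerivAt (fun y : ℝ => 2*y) 2 y := by
    simpa using (hasDerivAt_id y).const_mul 2
  have h2 := h1.exp
  have h3 := (h2.add_const 1).pow 2
  have hne : ((Real.exp (2*y) + 1) ^ 2) ≠ 0 := by positivity
  have h4 := (h3.inv hne).const_mul (-4 : ℝ)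
  refine h4.congr_deriv ?_
  simp only [Pi.pow_apply, Pi.inv_apply]
  unfold gg
  have h := Real.exp_pos (2*y)
  field_simp
  ring

lemma hasDerivAt_s (y : ℝ) :
    HasDerivAt (fun y : ℝ => (1 / Real.cosh y) ^ 3) (-3 * Real.sinh y / Real.cosh y ^ 4) y := by
  have h1 := ((Real.hasDerivAt_cosh y).inv (cosh_ne y)).pow 3
  have hc := Real.cosh_pos y
  simp only [one_div]
  refine h1.congr_deriv ?_
  simp only [Pi.pow_apply, Pi.inv_apply]
  push_cast
  ring

lemma deriv_s : deriv (fun y : ℝ => (1 / Real.cosh y) ^ 3)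
    = fun y => -3 * Real.sinh y / Real.cosh y ^ 4 :=
  funext fun y => (hasDerivAt_s y).deriv

lemma abs_sinh_le (y : ℝ) : |Real.sinh y| ≤ Real.cosh y := by
  rw [abs_le]
  constructor
  · have h := Real.cosh_add_sinh y; have := Real.exp_pos y; linarith
  · have h := Real.cosh_sub_sinh y; have := Real.exp_pos (-y); linarith

lemma s'_abs (y : ℝ) : |(-3 * Real.sinh y / Real.cosh y ^ 4)| ≤ 3 * (1 / Real.cosh y) ^ 3 := by
  have hc := Real.cosh_pos y
  rw [abs_div, abs_of_pos (by positivity : (0:ℝ) < Real.cosh y ^ 4)]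
  have h1 : |(-3 : ℝ) * Real.sinh y| = 3 * |Real.sinh y| := by
    rw [abs_mul]; norm_num
  rw [h1]
  have h2 : 3 * |Real.sinh y| / Real.cosh y ^ 4 ≤ 3 * Real.cosh y / Real.cosh y ^ 4 := by
    gcongr
    exact abs_sinh_le y
  refine h2.trans_eq ?_
  field_simp

lemma K_eq (a y : ℝ) : K a y = 2 / (Real.exp y + Real.exp (-(y + 4*a))) := by
  unfold K
  rw [Real.cosh_eq]
  have e1 : Real.exp (y + 2*a) = Real.exp y * Real.exp (2*a) := by rw [← Real.exp_add]
  have e2 : Real.exp (-(y + 4*a)) = Real.exp (-(y + 2*a)) / Real.exp (2*a) := by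
    rw [← Real.exp_sub]; ring_nf
  rw [e1, e2]
  have h1 := Real.exp_pos (2*a)
  have h2 := Real.exp_pos (-(y+2*a))
  have h3 := Real.exp_pos y
  have hne : Real.exp y * Real.exp (2 * a) + Real.exp (-(y + 2 * a)) ≠ 0 := by positivity
  field_simp

lemma K_nonneg (a y : ℝ) : 0 ≤ K a y := by
  unfold K
  have := Real.cosh_pos (y + 2*a)
  positivity

lemma K_le (a y : ℝ) : K a y ≤ 2 * Real.exp (-y) := by
  rw [K_eq]
  have h1 := Real.exp_pos y
  have h2 := Real.exp_pos (-(y + 4*a))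
  calc 2 / (Real.exp y + Real.exp (-(y + 4*a))) ≤ 2 / Real.exp y := by
        apply div_le_div_of_nonneg_left (by norm_num) h1
        linarith
    _ = 2 * Real.exp (-y) := by rw [Real.exp_neg, div_eq_mul_inv]

lemma K_tendsto (y : ℝ) : Tendsto (fun a => K a y) atTop (𝓝 (2 * Real.exp (-y))) := by
  simp only [K_eq]
  have l0 : Tendsto (fun a : ℝ => -(y + 4*a)) atTop atBot := by
    have h4 : Tendsto (fun a : ℝ => 4*a) atTop atTop :=
      Tendsto.const_mul_atTop (by norm_num) tendsto_id
    have h5 : Tendsto (fun a : ℝ => -(4*a)) atTop atBot := tendsto_neg_atBot_iff.mpr h4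
    have h6 := tendsto_atBot_add_const_left atTop (-y) h5
    convert h6 using 2 with a
    ring
  have h0 : Tendsto (fun a : ℝ => Real.exp (-(y + 4*a))) atTop (𝓝 0) :=
    Real.tendsto_exp_atBot.comp l0
  have h1 : Tendsto (fun a : ℝ => Real.exp y + Real.exp (-(y + 4*a))) atTop
      (𝓝 (Real.exp y + 0)) := tendsto_const_nhds.add h0
  have h2 : Tendsto (fun a : ℝ => 2 / (Real.exp y + Real.exp (-(y + 4*a)))) atTop
      (𝓝 (2 / (Real.exp y + 0))) :=
    tendsto_const_nhds.div h1 (by positivity)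
  convert h2 using 2
  rw [Real.exp_neg]
  rw [add_zero, div_eq_mul_inv]

lemma exp2_atBot : Tendsto (fun y : ℝ => Real.exp (2*y)) atBot (𝓝 0) :=
  Real.tendsto_exp_atBot.comp (Tendsto.const_mul_atBot (by norm_num) tendsto_id)

lemma exp2_atTop : Tendsto (fun y : ℝ => Real.exp (2*y)) atTop atTop :=
  Real.tendsto_exp_atTop.comp (Tendsto.const_mul_atTop (by norm_num) tendsto_id)

lemma Fa_atBot : Tendsto Fa atBot (𝓝 (-4)) := by
  have h1 : Tendsto (fun y : ℝ => (Real.exp (2*y) + 1) ^ 2) atBot (𝓝 ((0+1)^2)) :=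
    (exp2_atBot.add tendsto_const_nhds).pow 2
  have h2 := (h1.inv₀ (by norm_num)).const_mul (-4 : ℝ)
  norm_num at h2
  exact h2.neg.congr fun y => by unfold Fa; ring

lemma Fa_atTop : Tendsto Fa atTop (𝓝 0) := by
  have h1 : Tendsto (fun y : ℝ => (Real.exp (2*y) + 1) ^ 2) atTop atTop := by
    have := (exp2_atTop.atTop_add tendsto_const_nhds (C := 1))
    have h2 := this.atTop_mul_atTop₀ this
    convert h2 using 2 with y
    ring
  have h3 := h1.inv_tendsto_atTop.const_mul (-4 : ℝ)
  norm_num at h3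
  exact h3.congr fun y => by unfold Fa; ring

lemma gg_atBot : Tendsto gg atBot (𝓝 0) := by
  have h := (exp2_atBot.const_mul (16:ℝ)).div
    ((exp2_atBot.add tendsto_const_nhds).pow 3) (by norm_num : ((0:ℝ)+1)^3 ≠ 0)
  norm_num at h
  exact h

lemma gg_nonneg (y : ℝ) : 0 ≤ gg y := by
  unfold gg
  positivity

lemma gg_le (y : ℝ) : gg y ≤ 2 * Real.exp (-y) := by
  rw [← gid y]
  have hc := Real.cosh_pos y
  have h1 : 1 / Real.cosh y ≤ 1 := by
    rw [div_le_one hc]; exact Real.one_le_cosh y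
  have h2 : (1 / Real.cosh y) ^ 3 ≤ 1 := by
    calc (1 / Real.cosh y) ^ 3 ≤ 1 ^ 3 := pow_le_pow_left₀ (by positivity) h1 3
      _ = 1 := one_pow 3
  have h3 : (0:ℝ) < 2 * Real.exp (-y) := by positivity
  exact mul_le_of_le_one_left h3.le h2

lemma gg_atTop : Tendsto gg atTop (𝓝 0) := by
  apply squeeze_zero gg_nonneg gg_le
  have h : Tendsto (fun y : ℝ => Real.exp (-y)) atTop (𝓝 0) :=
    Real.tendsto_exp_atBot.comp (tendsto_neg_atBot_iff.mpr tendsto_id)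
  have h2 := h.const_mul (2:ℝ)
  norm_num at h2
  exact h2

lemma cont_sech : Continuous (fun y : ℝ => 1 / Real.cosh y) :=
  continuous_const.div Real.continuous_cosh cosh_ne

lemma cont_gg : Continuous gg := by
  unfold gg
  apply Continuous.div (by continuity) (by continuity)
  intro y
  positivity

lemma cont_s' : Continuous (fun y : ℝ => -3 * Real.sinh y / Real.cosh y ^ 4) :=
  Continuous.div (by continuity) (by continuity) (fun y => pow_ne_zero 4 (cosh_ne y))

lemma cont_K (a : ℝ) : Continuous (fun y : ℝ => K a y) := by
  unfold K
  exact continuous_const.mul (cont_sech.comp (continuous_id.add continuous_const))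

lemma integrable_gg : Integrable gg := by
  have hIoi : IntegrableOn gg (Set.Ioi (0:ℝ)) := by
    apply Integrable.mono' ((exp_neg_integrableOn_Ioi 0 one_pos).const_mul 2)
      cont_gg.aestronglyMeasurable.restrict
    refine Eventually.of_forall fun y => ?_
    rw [Real.norm_of_nonneg (gg_nonneg y)]
    simpa using gg_le y
  have hIic : IntegrableOn gg (Set.Iic (0:ℝ)) := by
    apply Integrable.mono' ((integrableOn_exp_Iic 0).const_mul 16)
      cont_gg.aestronglyMeasurable.restrict
    filter_upwards [ae_restrict_mem measurableSet_Iic] with y (hy : y ≤ 0)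
    rw [Real.norm_of_nonneg (gg_nonneg y)]
    unfold gg
    have h1 : Real.exp (2*y) ≤ Real.exp y := by
      apply Real.exp_le_exp.mpr; linarith
    have h2 : (1:ℝ) ≤ (Real.exp (2*y) + 1) ^ 3 :=
      one_le_pow₀ (by linarith [Real.exp_pos (2*y)])
    calc 16 * Real.exp (2*y) / (Real.exp (2*y) + 1) ^ 3 ≤ 16 * Real.exp (2*y) / 1 := by
          gcongr
      _ = 16 * Real.exp (2*y) := by ring
      _ ≤ 16 * Real.exp y := by linarith
  have := hIic.union hIoi
  rwa [Set.Iic_union_Ioi, integrableOn_univ] at this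

end TailInteractionAux

open TailInteractionAux

/-- Leading-order soliton tail-interaction integrals: with `φ = sech`,
`∫ φ³(x-a)φ(x+a) dx = 4e^{-2a}(1 + o(1))` and `∫ (φ³)'(x-a)φ(x+a) dx = 4e^{-2a}(1 + o(1))`
as `a → ∞`. -/
theorem tail_interaction_integrals :
    Tendsto (fun a : ℝ => Real.exp (2 * a) *
        ∫ x : ℝ, (1 / Real.cosh (x - a)) ^ 3 * (1 / Real.cosh (x + a))) atTop (nhds 4)
    ∧ Tendsto (fun a : ℝ => Real.exp (2 * a) *
        ∫ x : ℝ, deriv (fun y : ℝ => (1 / Real.cosh y) ^ 3) (x - a) * (1 / Real.cosh (x + a)))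
        atTop (nhds 4) := by
  constructor
  · -- first integral
    have key1 : ∀ a : ℝ, Real.exp (2 * a) *
        (∫ x : ℝ, (1 / Real.cosh (x - a)) ^ 3 * (1 / Real.cosh (x + a)))
        = ∫ y : ℝ, (1 / Real.cosh y) ^ 3 * K a y := by
      intro a
      have h1 : (∫ x : ℝ, (1 / Real.cosh (x - a)) ^ 3 * (1 / Real.cosh (x + a)))
          = ∫ y : ℝ, (1 / Real.cosh y) ^ 3 * (1 / Real.cosh (y + 2 * a)) := by
        rw [← integral_sub_right_eq_self
          (fun y : ℝ => (1 / Real.cosh y) ^ 3 * (1 / Real.cosh (y + 2 * a))) a]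
        congr 1
        funext x
        rw [show x - a + 2 * a = x + a by ring]
      rw [h1, ← integral_const_mul]
      congr 1
      funext y
      unfold K
      ring
    have hval : (∫ y : ℝ, (1 / Real.cosh y) ^ 3 * (2 * Real.exp (-y))) = 4 := by
      have hderiv : ∀ y : ℝ, HasDerivAt Fa ((1 / Real.cosh y) ^ 3 * (2 * Real.exp (-y))) y := by
        intro y; rw [gid y]; exact hasDerivAt_Fa y
      have hint : Integrable (fun y : ℝ => (1 / Real.cosh y) ^ 3 * (2 * Real.exp (-y))) :=
        integrable_gg.congr (Eventually.of_forall fun y => (gid y).symm)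
      have h := integral_of_hasDerivAt_of_tendsto hderiv hint Fa_atBot Fa_atTop
      rw [h]; norm_num
    have hdct : Tendsto (fun a : ℝ => ∫ y : ℝ, (1 / Real.cosh y) ^ 3 * K a y) atTop
        (𝓝 (∫ y : ℝ, (1 / Real.cosh y) ^ 3 * (2 * Real.exp (-y)))) := by
      apply tendsto_integral_filter_of_dominated_convergence gg
      · exact Eventually.of_forall fun a =>
          ((cont_sech.pow 3).mul (cont_K a)).aestronglyMeasurable
      · refine Eventually.of_forall fun a => Eventually.of_forall fun y => ?_
        have hc := Real.cosh_pos y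
        have hs : (0:ℝ) ≤ (1 / Real.cosh y) ^ 3 := by positivity
        rw [Real.norm_of_nonneg (mul_nonneg hs (K_nonneg a y)), ← gid y]
        exact mul_le_mul_of_nonneg_left (K_le a y) hs
      · exact integrable_gg
      · exact Eventually.of_forall fun y => tendsto_const_nhds.mul (K_tendsto y)
    rw [show (4:ℝ) = ∫ y : ℝ, (1 / Real.cosh y) ^ 3 * (2 * Real.exp (-y)) from hval.symm]
    exact (tendsto_congr key1).mpr hdct
  · -- second integral
    simp only [deriv_s]
    have key2 : ∀ a : ℝ, Real.exp (2 * a) *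
        (∫ x : ℝ, -3 * Real.sinh (x - a) / Real.cosh (x - a) ^ 4 * (1 / Real.cosh (x + a)))
        = ∫ y : ℝ, (-3 * Real.sinh y / Real.cosh y ^ 4) * K a y := by
      intro a
      have h1 : (∫ x : ℝ, -3 * Real.sinh (x - a) / Real.cosh (x - a) ^ 4 *
            (1 / Real.cosh (x + a)))
          = ∫ y : ℝ, -3 * Real.sinh y / Real.cosh y ^ 4 * (1 / Real.cosh (y + 2 * a)) := by
        rw [← integral_sub_right_eq_self
          (fun y : ℝ => -3 * Real.sinh y / Real.cosh y ^ 4 * (1 / Real.cosh (y + 2 * a))) a]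
        congr 1
        funext x
        rw [show x - a + 2 * a = x + a by ring]
      rw [h1, ← integral_const_mul]
      congr 1
      funext y
      unfold K
      ring
    have hval2 : (∫ y : ℝ, (-3 * Real.sinh y / Real.cosh y ^ 4) * (2 * Real.exp (-y))) = 4 := by
      have he : ∀ y : ℝ, HasDerivAt (fun y : ℝ => 2 * Real.exp (-y)) (-(2 * Real.exp (-y))) y := by
        intro y
        have h1 : HasDerivAt (fun y : ℝ => -y) (-1) y := (hasDerivAt_id y).neg
        have h2 := h1.exp.const_mul (2:ℝ)
        refine h2.congr_deriv ?_
        ring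
      have hderivG : ∀ y : ℝ, HasDerivAt (fun y => (1 / Real.cosh y) ^ 3 * (2 * Real.exp (-y)) + Fa y)
          ((-3 * Real.sinh y / Real.cosh y ^ 4) * (2 * Real.exp (-y))) y := by
        intro y
        have htot := ((hasDerivAt_s y).mul (he y)).add (hasDerivAt_Fa y)
        refine htot.congr_deriv ?_
        rw [← gid y]
        ring
      have hint2 : Integrable (fun y : ℝ => (-3 * Real.sinh y / Real.cosh y ^ 4) *
          (2 * Real.exp (-y))) := by
        apply Integrable.mono' (integrable_gg.const_mul 3)
          (cont_s'.mul (by continuity)).aestronglyMeasurable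
        refine Eventually.of_forall fun y => ?_
        rw [Pi.mul_apply, norm_mul, Real.norm_eq_abs, Real.norm_of_nonneg (by positivity : (0:ℝ) ≤ 2 * Real.exp (-y))]
        calc |(-3 * Real.sinh y / Real.cosh y ^ 4)| * (2 * Real.exp (-y))
            ≤ (3 * (1 / Real.cosh y) ^ 3) * (2 * Real.exp (-y)) :=
              mul_le_mul_of_nonneg_right (s'_abs y) (by positivity)
          _ = 3 * gg y := by rw [← gid y]; ring
      have hGbot : Tendsto (fun y => (1 / Real.cosh y) ^ 3 * (2 * Real.exp (-y)) + Fa y) atBot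
          (𝓝 (0 + -4)) :=
        Tendsto.add ((tendsto_congr fun y => gid y).mpr gg_atBot) Fa_atBot
      have hGtop : Tendsto (fun y => (1 / Real.cosh y) ^ 3 * (2 * Real.exp (-y)) + Fa y) atTop
          (𝓝 (0 + 0)) :=
        Tendsto.add ((tendsto_congr fun y => gid y).mpr gg_atTop) Fa_atTop
      have h := integral_of_hasDerivAt_of_tendsto hderivG hint2 hGbot hGtop
      rw [h]; norm_num
    have hdct2 : Tendsto (fun a : ℝ => ∫ y : ℝ, (-3 * Real.sinh y / Real.cosh y ^ 4) * K a y) atTop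
        (𝓝 (∫ y : ℝ, (-3 * Real.sinh y / Real.cosh y ^ 4) * (2 * Real.exp (-y)))) := by
      apply tendsto_integral_filter_of_dominated_convergence (fun y => 3 * gg y)
      · exact Eventually.of_forall fun a => (cont_s'.mul (cont_K a)).aestronglyMeasurable
      · refine Eventually.of_forall fun a => Eventually.of_forall fun y => ?_
        rw [norm_mul, Real.norm_eq_abs, Real.norm_of_nonneg (K_nonneg a y)]
        calc |(-3 * Real.sinh y / Real.cosh y ^ 4)| * K a y
            ≤ (3 * (1 / Real.cosh y) ^ 3) * (2 * Real.exp (-y)) :=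
              mul_le_mul (s'_abs y) (K_le a y) (K_nonneg a y) (by positivity)
          _ = 3 * gg y := by rw [← gid y]; ring
      · exact integrable_gg.const_mul 3
      · exact Eventually.of_forall fun y => tendsto_const_nhds.mul (K_tendsto y)
    rw [show (4:ℝ) = ∫ y : ℝ, (-3 * Real.sinh y / Real.cosh y ^ 4) * (2 * Real.exp (-y))
      from hval2.symm]
    exact (tendsto_congr key2).mpr hdct2
end
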